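/- Let ⟨B⟩ be a numerical semigroup minimally generated by q ≥ 4 elements satisfying q·n_B ≥ F_B + 1, and let k_1, k_2 be coprime with k_1 ∈ ⟨B⟩\B, k_2 ≥ 2, n_B ≥ 1. Then (q+1)(k_2·n_B + (k_1−1)(k_2−1)/4) − k_2·F_B − k_1(k_2−1) > 0. -/

import Mathlib

/-- The numerical semigroup (additive submonoid of ℕ) generated by a set `A`. -/
def NS (A : Set ℕ) : AddSubmonoid ℕ := AddSubmonoid.closure A

/-- `F` is the Frobenius number of `S`: `F ∉ S` and every larger integer lies in `S`. -/
def IsFrobenius (S : AddSubmonoid ℕ) (F : ℕ) : Prop :=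
  F ∉ S ∧ ∀ m : ℕ, F < m → m ∈ S

/-- The generating set `k₁A ∪ k₂B` of the gluing. -/
def glueGens (A B : Set ℕ) (k1 k2 : ℕ) : Set ℕ :=
  (fun a => k1 * a) '' A ∪ (fun b => k2 * b) '' B

/-- `n_S` : the number of elements of `S` less than the Frobenius number `F`. -/
noncomputable def nElt (S : AddSubmonoid ℕ) (F : ℕ) : ℕ := {s : ℕ | s ∈ S ∧ s < F}.ncard

/-- `A` is a minimal generating set of the semigroup it generates. -/
def MinimallyGenerates (A : Set ℕ) : Prop :=
  ∀ a ∈ A, a ∉ AddSubmonoid.closure (A \ {a})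

/-- The key inequality in the case `p = 1`, `q ≥ 4`:
`(q+1)(k₂ n_B + (k₁−1)(k₂−1)/4) − k₂ F_B − k₁(k₂−1) > 0`. -/
theorem wilf_case_p_one (B : Finset ℕ) (FB k1 k2 : ℕ)
    (hBmin : MinimallyGenerates (B : Set ℕ))
    (hFB : IsFrobenius (NS (B : Set ℕ)) FB)
    (hq : 4 ≤ B.card)
    (hWB : B.card * nElt (NS (B : Set ℕ)) FB ≥ FB + 1)
    (hk1B : k1 ∈ NS (B : Set ℕ)) (hk1nB : k1 ∉ B)
    (hk2 : 2 ≤ k2) (hnB : 1 ≤ nElt (NS (B : Set ℕ)) FB)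
    (hcop : Nat.Coprime k1 k2) :
    ((B.card : ℚ) + 1) * ((k2 : ℚ) * (nElt (NS (B : Set ℕ)) FB : ℚ) +
        ((k1 : ℚ) - 1) * ((k2 : ℚ) - 1) / 4) -
      (k2 : ℚ) * (FB : ℚ) - (k1 : ℚ) * ((k2 : ℚ) - 1) > 0 := by
  -- Elements of B are ≥ 2
  have h0B : (0:ℕ) ∉ B := by
    intro h0
    exact hBmin 0 h0 (AddSubmonoid.zero_mem _)
  have h1B : (1:ℕ) ∉ B := by
    intro h1
    obtain ⟨a, haB, ha1⟩ := Finset.exists_mem_ne (s := B) (by omega) 1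
    apply hBmin a haB
    have h1' : (1:ℕ) ∈ ((B : Set ℕ) \ {a}) := ⟨h1, by simpa using ha1.symm⟩
    have := (AddSubmonoid.closure ((B : Set ℕ) \ {a})).nsmul_mem (AddSubmonoid.subset_closure h1') a
    simpa using this
  have hB2 : ∀ b ∈ B, 2 ≤ b := by
    intro b hb
    rcases b with _ | _ | b
    · exact absurd hb h0B
    · exact absurd hb h1B
    · omega
  -- k1 ≠ 0 since coprime with k2 ≥ 2
  have hk1ne0 : k1 ≠ 0 := by
    rintro rfl
    simp [Nat.Coprime] at hcop
    omega
  -- every element of NS B is in B, 0, or ≥ 4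
  have hk14 : 4 ≤ k1 := by
    have key : k1 ∈ B ∨ k1 = 0 ∨ 4 ≤ k1 := by
      refine AddSubmonoid.closure_induction (motive := fun n _ => n ∈ B ∨ n = 0 ∨ 4 ≤ n)
        (fun x hx => Or.inl (by exact_mod_cast hx)) (Or.inr (Or.inl rfl)) ?_ hk1B
      intro x y _ _ hx hy
      rcases hx with hx | hx | hx <;> rcases hy with hy | hy | hy
      · right; right; have := hB2 x hx; have := hB2 y hy; omega
      · subst hy; left; simpa using hx
      · right; right; omega
      · subst hx; left; simpa using hy
      · subst hx; subst hy; right; left; rfl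
      · right; right; omega
      · right; right; have := hB2 y hy; omega
      · right; right; omega
      · right; right; omega
    rcases key with h | h | h
    · exact absurd h hk1nB
    · exact absurd h hk1ne0
    · exact h
  -- arithmetic
  set q := B.card with hqdef
  set n := nElt (NS (B : Set ℕ)) FB with hndef
  have hQ : (4:ℚ) ≤ (q:ℚ) := by exact_mod_cast hq
  have hN : (1:ℚ) ≤ (n:ℚ) := by exact_mod_cast hnB
  have hK1 : (4:ℚ) ≤ (k1:ℚ) := by exact_mod_cast hk14
  have hK2 : (2:ℚ) ≤ (k2:ℚ) := by exact_mod_cast hk2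
  have hW : (FB:ℚ) + 1 ≤ (q:ℚ) * (n:ℚ) := by exact_mod_cast hWB
  nlinarith [mul_nonneg (mul_nonneg (by linarith : (0:ℚ) ≤ (k2:ℚ) - 1)
      (by linarith : (0:ℚ) ≤ (q:ℚ) - 4)) (by linarith : (0:ℚ) ≤ (k1:ℚ) - 1),
    mul_nonneg (by linarith : (0:ℚ) ≤ (k2:ℚ)) (by linarith : (0:ℚ) ≤ (q:ℚ)*(n:ℚ) - (FB:ℚ) - 1),
    mul_nonneg (by linarith : (0:ℚ) ≤ (k2:ℚ)) (by linarith : (0:ℚ) ≤ (n:ℚ) - 1)]
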